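/- Let A be an algebra of subsets of Ω and λ ∈ ba(A)₊. Let H ⊆ A, and let (Hₙ) be a sequence in H such that m = ∑ₙ αₙ λ_{Hₙ} (with αₙ > 0, ∑αₙ = 1) dominates {λ_H : H ∈ H}, where λ_H(A) = λ(A ∩ H). Then for every H ∈ H, lim_{k→∞} λ(H \ (H₁ ∪ ⋯ ∪ H_k)) = 0. -/

import Mathlib

open Set Filter Topology

variable {Ω : Type*}

/-- `𝒜` is an algebra of subsets of `Ω`. -/
def IsAlg (𝒜 : Set (Set Ω)) : Prop :=
  ∅ ∈ 𝒜 ∧ Set.univ ∈ 𝒜 ∧ (∀ A ∈ 𝒜, Aᶜ ∈ 𝒜) ∧ ∀ A ∈ 𝒜, ∀ B ∈ 𝒜, A ∪ B ∈ 𝒜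

/-- bounded finitely additive set function (element of ba(𝒜)). -/
def IsFinAdd (𝒜 : Set (Set Ω)) (μ : Set Ω → ℝ) : Prop :=
  μ ∅ = 0 ∧
  (∀ A ∈ 𝒜, ∀ B ∈ 𝒜, Disjoint A B → μ (A ∪ B) = μ A + μ B) ∧
  ∃ C : ℝ, ∀ A ∈ 𝒜, |μ A| ≤ C

def IsPos (𝒜 : Set (Set Ω)) (μ : Set Ω → ℝ) : Prop := ∀ A ∈ 𝒜, 0 ≤ μ A

def IsCtblAdd (𝒜 : Set (Set Ω)) (μ : Set Ω → ℝ) : Prop :=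
  ∀ A : ℕ → Set Ω, (∀ n, A n ∈ 𝒜) → Pairwise (Function.onFun Disjoint A) →
    (⋃ n, A n) ∈ 𝒜 → HasSum (fun n => μ (A n)) (μ (⋃ n, A n))

/-- total variation of `μ` on `A`. -/
noncomputable def tv (𝒜 : Set (Set Ω)) (μ : Set Ω → ℝ) (A : Set Ω) : ℝ :=
  sSup {x | ∃ B ∈ 𝒜, B ⊆ A ∧ x = μ B - μ (A \ B)}

noncomputable def tvNorm (𝒜 : Set (Set Ω)) (μ : Set Ω → ℝ) : ℝ := tv 𝒜 μ Set.univ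

/-- `ν ≪ μ`, absolute continuity in the ε-δ sense. -/
def AC (𝒜 : Set (Set Ω)) (ν μ : Set Ω → ℝ) : Prop :=
  ∀ ε > (0:ℝ), ∃ δ > (0:ℝ), ∀ E ∈ 𝒜, tv 𝒜 μ E < δ → tv 𝒜 ν E < ε

/-- `μ ⊥ ν`, singularity in the ε sense. -/
def Sing (𝒜 : Set (Set Ω)) (μ ν : Set Ω → ℝ) : Prop :=
  ∀ ε > (0:ℝ), ∃ B ∈ 𝒜, tv 𝒜 μ Bᶜ + tv 𝒜 ν B < ε

/-- normalized total variation `|μ|/(1 ∨ ‖μ‖)`. -/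
noncomputable def nvar (𝒜 : Set (Set Ω)) (μ : Set Ω → ℝ) (A : Set Ω) : ℝ :=
  tv 𝒜 μ A / (1 ⊔ tvNorm 𝒜 μ)

/-- membership in `𝐀(M)`: countable convex combinations of normalized variations. -/
def MemAM (𝒜 : Set (Set Ω)) (M : Set (Set Ω → ℝ)) (m : Set Ω → ℝ) : Prop :=
  ∃ (μ : ℕ → Set Ω → ℝ) (α : ℕ → ℝ),
    (∀ n, μ n ∈ M) ∧ (∀ n, 0 ≤ α n) ∧ HasSum α 1 ∧
    ∀ A : Set Ω, m A = ∑' n, α n * nvar 𝒜 (μ n) A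

/-- membership in `𝐋(M)`. -/
def MemLM (𝒜 : Set (Set Ω)) (M : Set (Set Ω → ℝ)) (ν : Set Ω → ℝ) : Prop :=
  ∃ m, MemAM 𝒜 M m ∧ AC 𝒜 ν m

/-- order on ba(𝒜). -/
def baLE (𝒜 : Set (Set Ω)) (μ ν : Set Ω → ℝ) : Prop := ∀ A ∈ 𝒜, μ A ≤ ν A

/-- λ-completion of 𝒜. -/
def Completion (𝒜 : Set (Set Ω)) (l : Set Ω → ℝ) : Set (Set Ω) :=
  {B | ∀ ε > (0:ℝ), ∃ A ∈ 𝒜, ∃ A' ∈ 𝒜, A ⊆ B ∧ B ⊆ A' ∧ l (A' \ A) < ε}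

/-- the extension `λ̄` to the completion. -/
noncomputable def extOf (𝒜 : Set (Set Ω)) (l : Set Ω → ℝ) (B : Set Ω) : ℝ :=
  sSup {x | ∃ A ∈ 𝒜, A ⊆ B ∧ x = l A}

/-- λ-atom. -/
def IsLAtom (𝒜 : Set (Set Ω)) (l : Set Ω → ℝ) (B : Set Ω) : Prop :=
  B ∈ 𝒜 ∧ 0 < l B ∧ ∀ A ∈ 𝒜, A ⊆ B → l A = 0 ∨ l (B \ A) = 0

/-- simple 𝒜-measurable function. -/
def IsSimple (𝒜 : Set (Set Ω)) (f : Ω → ℝ) : Prop :=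
  (Set.range f).Finite ∧ ∀ c : ℝ, f ⁻¹' {c} ∈ 𝒜

/-- integral of a simple function. -/
noncomputable def simpleInt (μ : Set Ω → ℝ) (f : Ω → ℝ) : ℝ :=
  ∑ᶠ c : ℝ, c * μ (f ⁻¹' {c})

/-- outer measure associated with l on 𝒜. -/
noncomputable def outerOf (𝒜 : Set (Set Ω)) (l : Set Ω → ℝ) (S : Set Ω) : ℝ :=
  sInf {x | ∃ A ∈ 𝒜, S ⊆ A ∧ x = l A}

/-- Dunford–Schwartz approximating sequence for `f`. -/
def ApproxSeq (𝒜 : Set (Set Ω)) (l : Set Ω → ℝ) (f : Ω → ℝ) (g : ℕ → Ω → ℝ) : Prop :=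
  (∀ n, IsSimple 𝒜 (g n)) ∧
  (∀ ε > (0:ℝ), ∃ N, ∀ p ≥ N, ∀ q ≥ N, simpleInt l (fun x => |g p x - g q x|) < ε) ∧
  (∀ ε > (0:ℝ), Tendsto (fun n => outerOf 𝒜 l {x | ε ≤ |g n x - f x|}) atTop (nhds 0))

/-- membership in L¹(l). -/
def MemL1 (𝒜 : Set (Set Ω)) (l : Set Ω → ℝ) (f : Ω → ℝ) : Prop :=
  ∃ g, ApproxSeq 𝒜 l f g

/-- the Dunford–Schwartz integral. -/
noncomputable def dsInt (𝒜 : Set (Set Ω)) (l : Set Ω → ℝ) (f : Ω → ℝ) : ℝ :=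
  sInf {I | ∃ g, ApproxSeq 𝒜 l f g ∧ Tendsto (fun n => simpleInt l (g n)) atTop (nhds I)}

/-- L¹ seminorm distance. -/
noncomputable def l1dist (𝒜 : Set (Set Ω)) (l : Set Ω → ℝ) (f h : Ω → ℝ) : ℝ :=
  dsInt 𝒜 l (fun x => |f x - h x|)

/-- membership in the L¹(l)-closure of a set C of functions. -/
def InL1Closure (𝒜 : Set (Set Ω)) (l : Set Ω → ℝ) (C : Set (Ω → ℝ)) (f : Ω → ℝ) : Prop :=
  ∀ ε > (0:ℝ), ∃ h ∈ C, l1dist 𝒜 l f h < ε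

/-- the set C = K − Sim(𝒜)₊. -/
def ConeDiff (𝒜 : Set (Set Ω)) (K : Set (Ω → ℝ)) : Set (Ω → ℝ) :=
  {f | ∃ k ∈ K, ∃ s : Ω → ℝ, IsSimple 𝒜 s ∧ (∀ x, 0 ≤ s x) ∧ f = k - s}
/-- if m = ∑ αₙ λ_{Hₙ} dominates {λ_H : H ∈ ℋ}, then
λ(H \ (H₁ ∪ ⋯ ∪ H_k)) → 0 for every H ∈ ℋ. -/
theorem restricted_domination {Ω : Type*} (𝒜 : Set (Set Ω)) (hA : IsAlg 𝒜)
    (l : Set Ω → ℝ) (hl : IsFinAdd 𝒜 l) (hpos : IsPos 𝒜 l)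
    (H : Set (Set Ω)) (hH : H ⊆ 𝒜)
    (Hseq : ℕ → Set Ω) (hHseq : ∀ n, Hseq n ∈ H)
    (α : ℕ → ℝ) (hα : ∀ n, 0 < α n) (hsum : HasSum α 1)
    (m : Set Ω → ℝ) (hm : ∀ A : Set Ω, m A = ∑' n : ℕ, α n * l (A ∩ Hseq n))
    (hdom : ∀ H' ∈ H, AC 𝒜 (fun A => l (A ∩ H')) m) :
    ∀ H' ∈ H, Filter.Tendsto
      (fun k => l (H' \ ⋃ n ∈ Finset.range (k + 1), Hseq n))
      Filter.atTop (nhds 0) := by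
  classical
  obtain ⟨hl0, hladd, C, hC⟩ := hl
  have hC0 : 0 ≤ C := le_trans (abs_nonneg _) (hC ∅ hA.1)
  -- algebra closure lemmas
  have hinter : ∀ A ∈ 𝒜, ∀ B ∈ 𝒜, A ∩ B ∈ 𝒜 := by
    intro A hA' B hB
    have h1 := hA.2.2.2 Aᶜ (hA.2.2.1 A hA') Bᶜ (hA.2.2.1 B hB)
    have h2 := hA.2.2.1 _ h1
    simpa [Set.compl_union, compl_compl] using h2
  have hdiff : ∀ A ∈ 𝒜, ∀ B ∈ 𝒜, A \ B ∈ 𝒜 := by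
    intro A hA' B hB
    have := hinter A hA' Bᶜ (hA.2.2.1 B hB)
    simpa [Set.diff_eq] using this
  -- monotonicity of l on 𝒜
  have lmono : ∀ A ∈ 𝒜, ∀ B ∈ 𝒜, A ⊆ B → l A ≤ l B := by
    intro A hA' B hB hAB
    have hBA : B \ A ∈ 𝒜 := hdiff B hB A hA'
    have hd : Disjoint A (B \ A) := disjoint_sdiff_self_right
    have := hladd A hA' (B \ A) hBA hd
    rw [Set.union_diff_cancel hAB] at this
    have := hpos (B \ A) hBA
    linarith [hladd A hA' (B \ A) hBA hd]
  have lle : ∀ A ∈ 𝒜, l A ≤ C := fun A hA' => le_trans (le_abs_self _) (hC A hA')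
  intro H' hH'
  have hH'A : H' ∈ 𝒜 := hH hH'
  have hHnA : ∀ n, Hseq n ∈ 𝒜 := fun n => hH (hHseq n)
  -- finite unions
  have hUA : ∀ s : Finset ℕ, (⋃ n ∈ s, Hseq n) ∈ 𝒜 := by
    intro s
    induction s using Finset.induction_on with
    | empty => simpa using hA.1
    | insert a s' hx ih =>
      rw [Finset.set_biUnion_insert]
      exact hA.2.2.2 _ (hHnA a) _ ih
  set E : ℕ → Set Ω := fun k => H' \ ⋃ n ∈ Finset.range (k + 1), Hseq n with hE
  have hEA : ∀ k, E k ∈ 𝒜 := fun k => hdiff H' hH'A _ (hUA _)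
  have hEsub : ∀ k, E k ⊆ H' := fun k => Set.diff_subset
  have hEH' : ∀ k, E k ∩ H' = E k := fun k => Set.inter_eq_left.2 (hEsub k)
  -- summability
  have hsummα : Summable α := hsum.summable
  have htermnn : ∀ A ∈ 𝒜, ∀ n, 0 ≤ α n * l (A ∩ Hseq n) := fun A hA' n =>
    mul_nonneg (hα n).le (hpos _ (hinter A hA' _ (hHnA n)))
  have htermle : ∀ A ∈ 𝒜, ∀ n, α n * l (A ∩ Hseq n) ≤ C * α n := by
    intro A hA' n
    rw [mul_comm C (α n)]
    exact mul_le_mul_of_nonneg_left (lle _ (hinter A hA' _ (hHnA n))) (hα n).le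
  have hsummA : ∀ A ∈ 𝒜, Summable (fun n => α n * l (A ∩ Hseq n)) := fun A hA' =>
    Summable.of_nonneg_of_le (htermnn A hA') (htermle A hA') (hsummα.mul_left C)
  have hmnn : ∀ A ∈ 𝒜, 0 ≤ m A := by
    intro A hA'
    rw [hm]
    exact tsum_nonneg (htermnn A hA')
  have hmmono : ∀ A ∈ 𝒜, ∀ B ∈ 𝒜, A ⊆ B → m A ≤ m B := by
    intro A hA' B hB hAB
    rw [hm, hm]
    refine Summable.tsum_le_tsum (fun n => ?_) (hsummA A hA') (hsummA B hB)
    exact mul_le_mul_of_nonneg_left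
      (lmono _ (hinter A hA' _ (hHnA n)) _ (hinter B hB _ (hHnA n))
        (Set.inter_subset_inter_left _ hAB)) (hα n).le
  have hm0 : m ∅ = 0 := by
    rw [hm]; simp [hl0]
  -- tv m E ≤ m E
  have htvm : ∀ G ∈ 𝒜, tv 𝒜 m G ≤ m G := by
    intro G hG
    apply csSup_le
    · exact ⟨m G, G, hG, subset_rfl, by simp [hm0]⟩
    · rintro x ⟨B, hB, hBG, rfl⟩
      have h1 := hmmono B hB G hG hBG
      have h2 := hmnn (G \ B) (hdiff G hG B hB)
      linarith
  -- ν E ≤ tv ν E where ν A = l (A ∩ H')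
  have htvν : ∀ G ∈ 𝒜, l (G ∩ H') ≤ tv 𝒜 (fun A => l (A ∩ H')) G := by
    intro G hG
    apply le_csSup
    · refine ⟨C, ?_⟩
      rintro x ⟨B, hB, hBG, rfl⟩
      have h1 := lle (B ∩ H') (hinter B hB H' hH'A)
      have h2 := hpos ((G \ B) ∩ H') (hinter _ (hdiff G hG B hB) H' hH'A)
      linarith
    · exact ⟨G, hG, subset_rfl, by simp [hl0]⟩
  -- m (E k) → 0
  have hEinter : ∀ k, ∀ n ∈ Finset.range (k + 1), E k ∩ Hseq n = ∅ := by
    intro k n hn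
    apply Set.eq_empty_of_subset_empty
    rintro x ⟨hx1, hx2⟩
    exact hx1.2 (Set.mem_biUnion hn hx2)
  have hmEk_le : ∀ k, m (E k) ≤ C * (1 - ∑ n ∈ Finset.range (k + 1), α n) := by
    intro k
    rw [hm]
    set s : Set ℕ := ((Finset.range (k + 1) : Finset ℕ) : Set ℕ) with hs
    have hf := hsummA (E k) (hEA k)
    have hsplit : (∑' n : ↑s, α (n : ℕ) * l (E k ∩ Hseq (n : ℕ)))
        + (∑' n : ↑sᶜ, α (n : ℕ) * l (E k ∩ Hseq (n : ℕ)))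
        = ∑' n : ℕ, α n * l (E k ∩ Hseq n) :=
      Summable.tsum_add_tsum_compl (hf.subtype s) (hf.subtype sᶜ)
    have hzero : (∑' n : ↑s, α (n : ℕ) * l (E k ∩ Hseq (n : ℕ))) = 0 := by
      have h := Finset.tsum_subtype' (Finset.range (k + 1))
        (fun n => α n * l (E k ∩ Hseq n))
      have h2 : (∑ n ∈ Finset.range (k + 1), α n * l (E k ∩ Hseq n)) = 0 :=
        Finset.sum_eq_zero fun n hn => by rw [hEinter k n hn, hl0, mul_zero]
      exact h.trans h2
    have hps : (∑' n : ↑sᶜ, α (n : ℕ)) = 1 - ∑ n ∈ Finset.range (k + 1), α n := by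
      have h1 : (∑' n : ↑s, α (n : ℕ)) = ∑ n ∈ Finset.range (k + 1), α n :=
        Finset.tsum_subtype' (Finset.range (k + 1)) α
      have h2 : (∑' n : ↑s, α (n : ℕ)) + (∑' n : ↑sᶜ, α (n : ℕ)) = ∑' n : ℕ, α n :=
        Summable.tsum_add_tsum_compl (hsummα.subtype s) (hsummα.subtype sᶜ)
      rw [hsum.tsum_eq] at h2
      linarith
    have h2 : (∑' n : ↑sᶜ, α (n : ℕ) * l (E k ∩ Hseq (n : ℕ)))
        ≤ ∑' n : ↑sᶜ, C * α (n : ℕ) :=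
      Summable.tsum_le_tsum (fun n => htermle (E k) (hEA k) n)
        (hf.subtype _) ((hsummα.mul_left C).subtype _)
    have h3 : (∑' n : ↑sᶜ, C * α (n : ℕ)) = C * ∑' n : ↑sᶜ, α (n : ℕ) := tsum_mul_left
    rw [← hsplit, hzero, zero_add]
    rw [h3, hps] at h2
    exact h2
  have htail : Tendsto (fun k => C * (1 - ∑ n ∈ Finset.range (k + 1), α n)) atTop (nhds 0) := by
    have h1 : Tendsto (fun k => ∑ n ∈ Finset.range (k + 1), α n) atTop (nhds 1) :=
      (hsum.tendsto_sum_nat).comp (tendsto_add_atTop_nat 1)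
    have h2 : Tendsto (fun k => C * (1 - ∑ n ∈ Finset.range (k + 1), α n)) atTop
        (nhds (C * (1 - 1))) := (tendsto_const_nhds.sub h1).const_mul C
    simpa using h2
  have hmE0 : Tendsto (fun k => m (E k)) atTop (nhds 0) := by
    refine squeeze_zero (fun k => hmnn (E k) (hEA k)) hmEk_le htail
  -- conclude
  rw [Metric.tendsto_atTop] at hmE0 ⊢
  intro ε hε
  obtain ⟨δ, hδ, hδ'⟩ := hdom H' hH' ε hε
  obtain ⟨N, hN⟩ := hmE0 δ hδ
  refine ⟨N, fun k hk => ?_⟩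
  have hmEk : m (E k) < δ := by
    have := hN k hk
    rwa [Real.dist_eq, sub_zero, abs_of_nonneg (hmnn (E k) (hEA k))] at this
  have htvmEk : tv 𝒜 m (E k) < δ := lt_of_le_of_lt (htvm (E k) (hEA k)) hmEk
  have := hδ' (E k) (hEA k) htvmEk
  have hlEk : l (E k) < ε := by
    have h1 := htvν (E k) (hEA k)
    rw [hEH'] at h1
    linarith
  rw [Real.dist_eq, sub_zero, abs_of_nonneg (hpos (E k) (hEA k))]
  exact hlEk
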